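/- arXiv:1404.3153 — 2 statements merged into one kernel-verified Lean document; each statement's English description precedes it below -/
import Mathlib

section
/- Let κ, θ ∈ ℝ, δ ∈ ℝ with δ ≠ 0, ρ ∈ ℝ, ξ ∈ ℂ, and ψ ∈ ℂ. Set b = κ − ρδiξ, and let d ∈ ℂ be any complex number with d² = b² − 2δ²ψ and d ≠ 0; assume b − d ≠ 0 and define f = (b + d)/(b − d). Define D(τ) = ((b + d)/δ²) · (1 − e^{dτ})/(1 − f e^{dτ}) for those τ ∈ ℝ with 1 − f e^{dτ} ≠ 0. Then D(0) = 0, and at every τ with 1 − f e^{dτ} ≠ 0 the function D is differentiable with D′(τ) = ψ + (ρδiξ − κ) D(τ) + (δ²/2) D(τ)². -/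
open Complex

set_option maxHeartbeats 1600000 in
/-- The function
`D(τ) = ((b+d)/δ²)(1 − e^{dτ})/(1 − f e^{dτ})` with `b = κ − ρδiξ`, `d² = b² − 2δ²ψ`,
`f = (b+d)/(b−d)` satisfies `D(0) = 0` and the Riccati ODE
`D′(τ) = ψ + (ρδiξ − κ) D(τ) + (δ²/2) D(τ)²` at every `τ` with `1 − f e^{dτ} ≠ 0`. -/
theorem heston_riccati_D
    (κ θ δ ρ : ℝ) (hδ : δ ≠ 0) (ξ ψ : ℂ)
    (b : ℂ) (hb : b = (κ : ℂ) - (ρ : ℂ) * (δ : ℂ) * Complex.I * ξ)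
    (d : ℂ) (hd2 : d ^ 2 = b ^ 2 - 2 * (δ : ℂ) ^ 2 * ψ) (hd : d ≠ 0)
    (hbd : b - d ≠ 0)
    (f : ℂ) (hf : f = (b + d) / (b - d))
    (D : ℝ → ℂ)
    (hD : ∀ τ : ℝ, D τ = ((b + d) / (δ : ℂ) ^ 2)
      * (1 - Complex.exp (d * (τ : ℂ))) / (1 - f * Complex.exp (d * (τ : ℂ)))) :
    D 0 = 0 ∧
      ∀ τ : ℝ, 1 - f * Complex.exp (d * (τ : ℂ)) ≠ 0 →
        HasDerivAt D
          (ψ + ((ρ : ℂ) * (δ : ℂ) * Complex.I * ξ - (κ : ℂ)) * D τ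
            + (δ : ℂ) ^ 2 / 2 * (D τ) ^ 2) τ := by
  have hδC : (δ : ℂ) ≠ 0 := Complex.ofReal_ne_zero.mpr hδ
  have hψ : ψ = (b ^ 2 - d ^ 2) / (2 * (δ : ℂ) ^ 2) := by
    field_simp
    linear_combination hd2
  constructor
  · rw [hD 0]; simp
  · intro τ hM
    have hDeq : D = fun τ : ℝ => ((b + d) / (δ : ℂ) ^ 2)
        * (1 - Complex.exp (d * (τ : ℂ))) / (1 - f * Complex.exp (d * (τ : ℂ))) :=
      funext hD
    set E : ℂ := Complex.exp (d * (τ : ℂ)) with hE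
    have hEderiv : HasDerivAt (fun t : ℝ => Complex.exp (d * (t : ℂ))) (d * E) τ := by
      have h1 : HasDerivAt (fun z : ℂ => Complex.exp (d * z)) (d * E) (τ : ℂ) := by
        simpa [hE, mul_comm] using ((hasDerivAt_id (τ : ℂ)).const_mul d).cexp
      exact h1.comp_ofReal
    have hnum : HasDerivAt (fun t : ℝ => ((b + d) / (δ : ℂ) ^ 2)
        * (1 - Complex.exp (d * (t : ℂ)))) (((b + d) / (δ : ℂ) ^ 2) * (-(d * E))) τ := by
      simpa using ((hasDerivAt_const τ (1 : ℂ)).sub hEderiv).const_mul ((b + d) / (δ : ℂ) ^ 2)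
    have hden : HasDerivAt (fun t : ℝ => 1 - f * Complex.exp (d * (t : ℂ)))
        (-(f * (d * E))) τ := by
      simpa [Pi.sub_def] using ((hasDerivAt_const τ (1 : ℂ)).sub (hEderiv.const_mul f))
    have hdiv := hnum.div hden hM
    simp only [Pi.div_def] at hdiv
    rw [← hDeq] at hdiv
    refine hdiv.congr_deriv ?_
    have hbk : (ρ : ℂ) * (δ : ℂ) * Complex.I * ξ - (κ : ℂ) = -b := by rw [hb]; ring
    obtain ⟨M', hM'def⟩ : ∃ M' : ℂ, M' = (b - d) - (b + d) * E := ⟨_, rfl⟩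
    have hM2 : M' ≠ 0 := by
      rw [hM'def]
      intro h0
      apply hM
      rw [hf]
      rw [sub_eq_zero] at h0
      field_simp
      linear_combination h0
    have hMrw : 1 - f * E = M' / (b - d) := by
      rw [hM'def, hf]; field_simp
    rw [hD τ, ← hE, hbk, hMrw, hf, hψ]
    field_simp [hM2, hbd, hδC]
    rw [hM'def]
    ring
end

section
/- Let κ, θ ∈ ℝ, δ ∈ ℝ with δ ≠ 0, ρ ∈ ℝ, ξ ∈ ℂ, and ψ ∈ ℂ. Set b = κ − ρδiξ, let d ∈ ℂ satisfy d² = b² − 2δ²ψ with d ≠ 0, assume b − d ≠ 0, and define f = (b + d)/(b − d) and D(τ) = ((b + d)/δ²)(1 − e^{dτ})/(1 − f e^{dτ}). Define C(τ) = (κθ/δ²) ( (b + d)τ − 2 Log( (1 − f e^{dτ})/(1 − f) ) ), where Log is the principal branch of the complex logarithm. Then C(0) = 0, and at every τ ∈ ℝ such that 1 − f e^{dτ} ≠ 0 and the quotient (1 − f e^{dτ})/(1 − f) does not lie on the nonpositive real axis (−∞, 0], the function C is differentiable with C′(τ) = κθ · D(τ). -/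
open Complex

/-- The function
`C(τ) = (κθ/δ²)((b+d)τ − 2 Log((1 − f e^{dτ})/(1 − f)))` satisfies `C(0) = 0` and
`C′(τ) = κθ D(τ)` at every `τ` where `1 − f e^{dτ} ≠ 0` and the quotient
`(1 − f e^{dτ})/(1 − f)` is off the nonpositive real axis, where
`D(τ) = ((b+d)/δ²)(1 − e^{dτ})/(1 − f e^{dτ})`, `b = κ − ρδiξ`, `d² = b² − 2δ²ψ`,
`f = (b+d)/(b−d)`, and `Log` is the principal branch of the complex logarithm. -/
theorem heston_ode_C
    (κ θ δ ρ : ℝ) (hδ : δ ≠ 0) (ξ ψ : ℂ)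
    (b : ℂ) (hb : b = (κ : ℂ) - (ρ : ℂ) * (δ : ℂ) * Complex.I * ξ)
    (d : ℂ) (hd2 : d ^ 2 = b ^ 2 - 2 * (δ : ℂ) ^ 2 * ψ) (hd : d ≠ 0)
    (hbd : b - d ≠ 0)
    (f : ℂ) (hf : f = (b + d) / (b - d))
    (D : ℝ → ℂ)
    (hD : ∀ τ : ℝ, D τ = ((b + d) / (δ : ℂ) ^ 2)
      * (1 - Complex.exp (d * (τ : ℂ))) / (1 - f * Complex.exp (d * (τ : ℂ))))
    (C : ℝ → ℂ)
    (hC : ∀ τ : ℝ, C τ = ((κ : ℂ) * (θ : ℂ) / (δ : ℂ) ^ 2)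
      * ((b + d) * (τ : ℂ)
        - 2 * Complex.log ((1 - f * Complex.exp (d * (τ : ℂ))) / (1 - f)))) :
    C 0 = 0 ∧
      ∀ τ : ℝ, 1 - f * Complex.exp (d * (τ : ℂ)) ≠ 0 →
        ¬(((1 - f * Complex.exp (d * (τ : ℂ))) / (1 - f)).im = 0 ∧
          ((1 - f * Complex.exp (d * (τ : ℂ))) / (1 - f)).re ≤ 0) →
        HasDerivAt C ((κ : ℂ) * (θ : ℂ) * D τ) τ := by
  have hδc : (δ : ℂ) ≠ 0 := by exact_mod_cast hδ
  have hf1 : 1 - f ≠ 0 := by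
    rw [hf]
    intro h
    have h2 : b - d = b + d := by
      field_simp at h
      linear_combination h
    have : d = 0 := by linear_combination (h2) / (-2)
    exact hd this
  constructor
  · rw [hC 0]
    simp [div_self hf1]
  · intro τ hne hslit
    have hmem : (1 - f * Complex.exp (d * (τ : ℂ))) / (1 - f) ∈ Complex.slitPlane := by
      rw [Complex.mem_slitPlane_iff]
      push_neg at hslit
      by_cases him : ((1 - f * Complex.exp (d * (τ : ℂ))) / (1 - f)).im = 0
      · exact Or.inl (lt_of_not_ge (fun h => (hslit him).not_gt (lt_of_le_of_ne h (by
          intro hre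
          have : (1 - f * Complex.exp (d * (τ : ℂ))) / (1 - f) = 0 :=
            Complex.ext hre him
          exact (div_ne_zero hne hf1) this))))
      · exact Or.inr him
    set τc : ℂ := (τ : ℂ)
    set E : ℂ := Complex.exp (d * τc) with hE
    -- derivative of the complex function
    have hz : HasDerivAt (fun z : ℂ => d * z) d τc := by
      simpa using (hasDerivAt_id τc).const_mul d
    have he : HasDerivAt (fun z : ℂ => Complex.exp (d * z)) (E * d) τc := hz.cexp
    have hu : HasDerivAt (fun z : ℂ => (1 - f * Complex.exp (d * z)) / (1 - f))
        ((-(f * (E * d))) / (1 - f)) τc := by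
      exact (((he.const_mul f).const_sub 1).div_const (1 - f))
    have hlog : HasDerivAt
        (fun z : ℂ => Complex.log ((1 - f * Complex.exp (d * z)) / (1 - f)))
        ((-(f * (E * d))) / (1 - f) / ((1 - f * E) / (1 - f))) τc := by
      exact hu.clog hmem
    have hF : HasDerivAt
        (fun z : ℂ => ((κ : ℂ) * (θ : ℂ) / (δ : ℂ) ^ 2)
          * ((b + d) * z - 2 * Complex.log ((1 - f * Complex.exp (d * z)) / (1 - f))))
        (((κ : ℂ) * (θ : ℂ) / (δ : ℂ) ^ 2)
          * ((b + d) - 2 * ((-(f * (E * d))) / (1 - f) / ((1 - f * E) / (1 - f))))) τc := by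
      have h1 : HasDerivAt (fun z : ℂ => (b + d) * z) (b + d) τc := by
        simpa using (hasDerivAt_id τc).const_mul (b + d)
      exact ((h1.sub (hlog.const_mul 2)).const_mul _)
    have hR : HasDerivAt C
        (((κ : ℂ) * (θ : ℂ) / (δ : ℂ) ^ 2)
          * ((b + d) - 2 * ((-(f * (E * d))) / (1 - f) / ((1 - f * E) / (1 - f))))) τ := by
      have := hF.comp_ofReal
      have heq : C = fun t : ℝ => ((κ : ℂ) * (θ : ℂ) / (δ : ℂ) ^ 2)
          * ((b + d) * (t : ℂ)
            - 2 * Complex.log ((1 - f * Complex.exp (d * (t : ℂ))) / (1 - f))) := by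
        funext t; exact hC t
      rw [heq]
      exact this
    convert hR using 1
    rw [hD τ, ← hE]
    have hfeq : f * (b - d) = b + d := by
      rw [hf]; field_simp
    have hne' : 1 - E * f ≠ 0 := by rwa [mul_comm] at hne
    field_simp
    linear_combination ((κ:ℂ) * (θ:ℂ) * E) * hfeq
end
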